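/- Let N ≥ 3 and let V = ℝ^N with a nondegenerate symmetric bilinear form h. For any G ∈ ⊙^{2k}V totally symmetric and trace-free, the tensor F^{A₁⁰A₁¹...A_{2k}⁰A_{2k}¹} := G^{A₁⁰...A_{2k}⁰} h^{(A₁¹A₂¹} ⋯ h^{A_{2k-1}¹A_{2k}¹)}, implicitly skew-symmetrized over each pair A_i⁰A_i¹, is symmetric under any interchange of the form-index pairs 𝐀_i ↔ 𝐀_j. -/
import Mathlib


open Finset

namespace Stmt16

/-- The symmetrized product `h^{(A₁¹A₂¹ ⋯ A_{2k-1}¹A_{2k}¹)}` of `k` copies of `h`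
over `2k` slots. -/
noncomputable def symH (N k : ℕ) (h : Matrix (Fin N) (Fin N) ℝ)
    (w : Fin (2 * k) → Fin N) : ℝ :=
  (1 / ((2 * k).factorial : ℝ)) *
    ∑ σ : Equiv.Perm (Fin (2 * k)), ∏ l : Fin k,
      h (w (σ ⟨2 * l.val, by have := l.isLt; omega⟩))
        (w (σ ⟨2 * l.val + 1, by have := l.isLt; omega⟩))

/-- `F^{A₁⁰A₁¹…A_{2k}⁰A_{2k}¹} := G^{A₁⁰…A_{2k}⁰}·h^{(A₁¹⋯A_{2k}¹)}`, skew-symmetrized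
over each index pair `A_i⁰A_i¹`;  here `v` lists the `A_i⁰` and `w` the `A_i¹`. -/
noncomputable def F (N k : ℕ) (h : Matrix (Fin N) (Fin N) ℝ)
    (G : (Fin (2 * k) → Fin N) → ℝ)
    (v w : Fin (2 * k) → Fin N) : ℝ :=
  ((1 : ℝ) / 2) ^ (2 * k) *
    ∑ ε : Fin (2 * k) → Bool,
      (∏ i : Fin (2 * k), (if ε i then (-1 : ℝ) else 1)) *
        G (fun i => if ε i then w i else v i) *
        symH N k h (fun i => if ε i then v i else w i)

end Stmt16

open Stmt16

/-- Let `N ≥ 3`, `V = ℝᴺ` with nondegenerate symmetric bilinear form `h`. For `G` a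
totally symmetric trace-free `2k`-tensor, the tensor
`F := G^{A₁⁰…A_{2k}⁰} h^{(A₁¹⋯A_{2k}¹)}`, skew-symmetrized over each pair `A_i⁰A_i¹`,
is symmetric under any interchange of the form-index pairs `𝐀_i ↔ 𝐀_j`. -/

lemma symH_comp (N k : ℕ) (h : Matrix (Fin N) (Fin N) ℝ)
    (u : Fin (2 * k) → Fin N) (τ : Equiv.Perm (Fin (2 * k))) :
    symH N k h (u ∘ τ) = symH N k h u := by
  unfold symH
  congr 1
  apply Fintype.sum_equiv (Equiv.mulLeft τ)
  intro σ
  simp [Equiv.Perm.mul_apply, Function.comp]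

theorem F_symmetric_under_pair_interchange (N k : ℕ) (hN : 3 ≤ N) (hk : 0 < k)
    (h : Matrix (Fin N) (Fin N) ℝ) (hsym : h.IsSymm) (hnd : IsUnit h)
    (G : (Fin (2 * k) → Fin N) → ℝ)
    (hGsym : ∀ (u : Fin (2 * k) → Fin N) (σ : Equiv.Perm (Fin (2 * k))),
      G (u ∘ σ) = G u)
    (hGtf : ∀ (u : Fin (2 * k) → Fin N) (a b : Fin (2 * k)), a ≠ b →
      ∑ p : Fin N, ∑ q : Fin N,
        h p q * G (Function.update (Function.update u a p) b q) = 0) :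
    ∀ (v w : Fin (2 * k) → Fin N) (i j : Fin (2 * k)),
      F N k h G (v ∘ Equiv.swap i j) (w ∘ Equiv.swap i j) = F N k h G v w := by
  intro v w i j
  unfold F
  congr 1
  apply Fintype.sum_equiv (Equiv.arrowCongr (Equiv.swap i j) (Equiv.refl Bool))
  intro ε
  have hε : ∀ x, (Equiv.arrowCongr (Equiv.swap i j) (Equiv.refl Bool) ε) x
      = ε (Equiv.swap i j x) := by
    intro x
    simp [Equiv.arrowCongr, Equiv.symm_apply_eq, Equiv.swap_apply_self]
  simp only [hε]
  have h2 : G (fun x => if ε x then w ((Equiv.swap i j) x) else v ((Equiv.swap i j) x))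
      = G (fun y => if ε ((Equiv.swap i j) y) then w y else v y) := by
    rw [← hGsym (fun y => if ε ((Equiv.swap i j) y) then w y else v y) (Equiv.swap i j)]
    congr 1; funext x; simp [Equiv.swap_apply_self, Function.comp]
  have h3 : symH N k h (fun x => if ε x then v ((Equiv.swap i j) x)
      else w ((Equiv.swap i j) x))
      = symH N k h (fun y => if ε ((Equiv.swap i j) y) then v y else w y) := by
    rw [← symH_comp N k h (fun y => if ε ((Equiv.swap i j) y) then v y else w y)
      (Equiv.swap i j)]
    congr 1; funext x; simp [Equiv.swap_apply_self, Function.comp]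
  simp only [Function.comp_apply]
  rw [h2, h3,
    Equiv.prod_comp (Equiv.swap i j) (fun x => if ε x then (-1 : ℝ) else 1)]
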